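/- Suppose σ_{y·zx} > 0 (i.e. R²_{y·zx} < 1), σ_{z·x} > 0, σ_{w·x} > 0, σ_{w·zx} > 0, σ_{z·wx} > 0 (i.e. t_W is finite), and df > 1. Then the nominal standard errors of the Z-coefficient with and without adjustment for W satisfy SE(β̂) = SE(b̂) · √(1 + (1 + t_W²)/(df − 1)) · √(1 − ρ²_{yw·zx}). -/

import Mathlib

open scoped BigOperators

/-- Weighted inner product on ℝⁿ: `(A,B) := (∑ i, wᵢ Aᵢ Bᵢ) / (∑ i, wᵢ)`. -/
noncomputable def wip {n : ℕ} (w A B : Fin n → ℝ) : ℝ :=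
  (∑ i, w i * A i * B i) / (∑ i, w i)

/-- `P` is the best linear predictor (orthogonal projection with respect to the
weighted inner product `wip w`) of `A` onto the span of the collection `C`. -/
def IsBlp {n : ℕ} (w : Fin n → ℝ) (C : Set (Fin n → ℝ)) (A P : Fin n → ℝ) : Prop :=
  P ∈ Submodule.span ℝ C ∧ ∀ v ∈ Submodule.span ℝ C, wip w (A - P) v = 0

section lemmas
variable {n : ℕ} (w : Fin n → ℝ)

lemma wip_comm (A B : Fin n → ℝ) : wip w A B = wip w B A := by
  unfold wip; congr 1; exact Finset.sum_congr rfl fun i _ => by ring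

lemma wip_sub_left (A B C : Fin n → ℝ) : wip w (A - B) C = wip w A C - wip w B C := by
  unfold wip
  rw [← sub_div, ← Finset.sum_sub_distrib]
  congr 1
  exact Finset.sum_congr rfl fun i _ => by simp [Pi.sub_apply]; ring

lemma wip_smul_left (r : ℝ) (A B : Fin n → ℝ) : wip w (r • A) B = r * wip w A B := by
  unfold wip
  rw [← mul_div_assoc, Finset.mul_sum]
  congr 1
  exact Finset.sum_congr rfl fun i _ => by simp [Pi.smul_apply]; ring

lemma wip_add_left (A B C : Fin n → ℝ) : wip w (A + B) C = wip w A C + wip w B C := by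
  unfold wip
  rw [← add_div, ← Finset.sum_add_distrib]
  congr 1
  exact Finset.sum_congr rfl fun i _ => by simp [Pi.add_apply]; ring

lemma wip_sub_right (A B C : Fin n → ℝ) : wip w A (B - C) = wip w A B - wip w A C := by
  rw [wip_comm, wip_sub_left, wip_comm w B A, wip_comm w C A]

lemma wip_add_right (A B C : Fin n → ℝ) : wip w A (B + C) = wip w A B + wip w A C := by
  rw [wip_comm, wip_add_left, wip_comm w B A, wip_comm w C A]

lemma wip_smul_right (r : ℝ) (A B : Fin n → ℝ) : wip w A (r • B) = r * wip w A B := by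
  rw [wip_comm, wip_smul_left, wip_comm w B A]

lemma wip_self_nonneg (hw : ∀ i, 0 < w i) (A : Fin n → ℝ) : 0 ≤ wip w A A := by
  apply div_nonneg
  · exact Finset.sum_nonneg fun i _ => by nlinarith [hw i, mul_self_nonneg (A i)]
  · exact Finset.sum_nonneg fun i _ => (hw i).le

lemma wip_self_eq_zero (hw : ∀ i, 0 < w i) (hS : 0 < ∑ i, w i) {A : Fin n → ℝ}
    (h : wip w A A = 0) : A = 0 := by
  unfold wip at h
  have hnum : ∑ i, w i * A i * A i = 0 := by
    rcases div_eq_zero_iff.mp h with h' | h'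
    · exact h'
    · exact absurd h' (ne_of_gt hS)
  have hall := (Finset.sum_eq_zero_iff_of_nonneg
    (fun i _ => by nlinarith [hw i, mul_self_nonneg (A i)])).mp hnum
  funext i
  have hi := hall i (Finset.mem_univ i)
  rw [mul_assoc] at hi
  have := (mul_eq_zero.mp hi).resolve_left (hw i).ne'
  exact mul_self_eq_zero.mp this

lemma blp_unique (hw : ∀ i, 0 < w i) (hS : 0 < ∑ i, w i) {C : Set (Fin n → ℝ)}
    {A P Q : Fin n → ℝ} (hP : IsBlp w C A P) (hQ : IsBlp w C A Q) : P = Q := by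
  have hm : P - Q ∈ Submodule.span ℝ C := sub_mem hP.1 hQ.1
  have h1 := hP.2 _ hm
  have h2 := hQ.2 _ hm
  have hfun : (A - Q) - (A - P) = P - Q := by abel
  have h3 : wip w (P - Q) (P - Q) = 0 := by
    nth_rewrite 1 [← hfun]
    rw [wip_sub_left, h1, h2, sub_zero]
  have := wip_self_eq_zero w hw hS h3
  exact sub_eq_zero.mp this

lemma blp_decomp (hw : ∀ i, 0 < w i) (hS : 0 < ∑ i, w i) {C : Set (Fin n → ℝ)}
    {V A P R Q : Fin n → ℝ}
    (hP : IsBlp w C A P) (hR : IsBlp w C V R) (hQ : IsBlp w (insert V C) A Q)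
    (hV : wip w (V - R) (V - R) ≠ 0) :
    A - Q = (A - P) - (wip w (A - P) (V - R) / wip w (V - R) (V - R)) • (V - R) := by
  set l := wip w (A - P) (V - R) / wip w (V - R) (V - R) with hl
  have hQ' : IsBlp w (insert V C) A (P + l • (V - R)) := by
    constructor
    · have hVmem : V ∈ Submodule.span ℝ (insert V C) :=
        Submodule.subset_span (Set.mem_insert _ _)
      have hmono : Submodule.span ℝ C ≤ Submodule.span ℝ (insert V C) :=
        Submodule.span_mono (Set.subset_insert _ _)
      exact add_mem (hmono hP.1) (Submodule.smul_mem _ _ (sub_mem hVmem (hmono hR.1)))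
    · intro v hv
      rw [Submodule.mem_span_insert] at hv
      obtain ⟨c, z, hz, rfl⟩ := hv
      have hx : A - (P + l • (V - R)) = (A - P) - l • (V - R) := by abel
      have hVsplit : (V : Fin n → ℝ) = (V - R) + R := by abel
      have hPz := hP.2 z hz
      have hRz := hR.2 z hz
      have hPR := hP.2 R hR.1
      have hRR := hR.2 R hR.1
      have hld : l * wip w (V - R) (V - R) = wip w (A - P) (V - R) := by
        rw [hl, div_mul_cancel₀ _ hV]
      rw [hx, wip_sub_left, wip_smul_left, wip_add_right, wip_add_right,
        wip_smul_right, wip_smul_right, hPz, hRz]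
      rw [show wip w (A - P) V = wip w (A - P) (V - R) + wip w (A - P) R by
        rw [← wip_add_right, ← hVsplit]]
      rw [show wip w (V - R) V = wip w (V - R) (V - R) + wip w (V - R) R by
        rw [← wip_add_right, ← hVsplit]]
      rw [hPR, hRR]
      linear_combination (-c) * hld
  have heq := blp_unique w hw hS hQ hQ'
  rw [heq, sub_add_eq_sub_sub]

lemma blp_var (hw : ∀ i, 0 < w i) (hS : 0 < ∑ i, w i) {C : Set (Fin n → ℝ)}
    {V A P R Q : Fin n → ℝ}
    (hP : IsBlp w C A P) (hR : IsBlp w C V R) (hQ : IsBlp w (insert V C) A Q)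
    (hV : wip w (V - R) (V - R) ≠ 0) :
    wip w (A - Q) (A - Q) =
      wip w (A - P) (A - P) - (wip w (A - P) (V - R)) ^ 2 / wip w (V - R) (V - R) := by
  have expand : ∀ x y : Fin n → ℝ, wip w y y ≠ 0 →
      wip w (x - (wip w x y / wip w y y) • y) (x - (wip w x y / wip w y y) • y) =
        wip w x x - (wip w x y) ^ 2 / wip w y y := by
    intro x y hy
    rw [wip_sub_left, wip_sub_right, wip_sub_right, wip_smul_left, wip_smul_left,
      wip_smul_right, wip_smul_right, wip_comm w y x]
    field_simp
    ring
  rw [blp_decomp w hw hS hP hR hQ hV]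
  exact expand (A - P) (V - R) hV

end lemmas

lemma stmt4_alg (a b c d e f D s r : ℝ) (ha : 0 < a) (hb : 0 < b) (hc : 0 < c)
    (hd : 0 < d) (he : 0 < e) (hf : 0 ≤ f) (hD : 1 < D)
    (h1 : e = b - s ^ 2 / c) (h2 : f = a - r ^ 2 / d) :
    Real.sqrt f / (Real.sqrt (D - 1) * Real.sqrt e) =
      Real.sqrt a / (Real.sqrt D * Real.sqrt b) *
        Real.sqrt (1 + (1 + (s / c / (Real.sqrt e / (Real.sqrt D * Real.sqrt c))) ^ 2) / (D - 1)) *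
        Real.sqrt (1 - (r / (Real.sqrt a * Real.sqrt d)) ^ 2) := by
  have hD0 : (0:ℝ) < D := by linarith
  have hD1 : (0:ℝ) < D - 1 := by linarith
  have ht2 : (s / c / (Real.sqrt e / (Real.sqrt D * Real.sqrt c))) ^ 2 = s ^ 2 * D / (c * e) := by
    rw [div_pow, div_pow, div_pow, mul_pow, Real.sq_sqrt hD0.le, Real.sq_sqrt hc.le,
      Real.sq_sqrt he.le]
    field_simp
  have hρ2 : (r / (Real.sqrt a * Real.sqrt d)) ^ 2 = r ^ 2 / (a * d) := by
    rw [div_pow, mul_pow, Real.sq_sqrt ha.le, Real.sq_sqrt hd.le]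
  have h1' : e * c = b * c - s ^ 2 := by
    rw [h1]; field_simp
  have key1 : 1 + (1 + s ^ 2 * D / (c * e)) / (D - 1) = D * b / (e * (D - 1)) := by
    field_simp
    linear_combination D * h1'
  have key2 : 1 - r ^ 2 / (a * d) = f / a := by
    rw [h2, sub_div, div_self ha.ne', div_div, mul_comm d a]
  rw [ht2, hρ2, key1, key2]
  rw [← Real.sqrt_mul hD1.le e, ← Real.sqrt_mul hD0.le b,
    ← Real.sqrt_div hf, ← Real.sqrt_div ha.le]
  rw [← Real.sqrt_mul (by positivity) (D * b / (e * (D - 1))),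
    ← Real.sqrt_mul (by positivity) (f / a)]
  congr 1
  field_simp


/-- Proposition 2 of Hosman–Hansen–Holland: if `σ_{y·zx} > 0`,
`σ_{z·x} > 0`, `σ_{w·x} > 0`, `σ_{w·zx} > 0`, `σ_{z·wx} > 0` and `df > 1`, then
`SE(β̂) = SE(b̂) · √(1 + (1 + t_W²)/(df − 1)) · √(1 − ρ²_{yw·zx})`. -/
theorem stmt4 {n : ℕ} (w : Fin n → ℝ) (hw : ∀ i, 0 < w i)
    (X : Set (Fin n → ℝ)) (hXfin : X.Finite)
    (h1 : (fun _ => (1 : ℝ)) ∈ Submodule.span ℝ X)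
    (Y Z W : Fin n → ℝ)
    (Pzx Pwx Pyzx Pwzx Pzwx Pyzxw : Fin n → ℝ)
    (hPzx : IsBlp w X Z Pzx)
    (hPwx : IsBlp w X W Pwx)
    (hPyzx : IsBlp w (insert Z X) Y Pyzx)
    (hPwzx : IsBlp w (insert Z X) W Pwzx)
    (hPzwx : IsBlp w (insert W X) Z Pzwx)
    (hPyzxw : IsBlp w (insert Z (insert W X)) Y Pyzxw)
    (hσyzx : 0 < wip w (Y - Pyzx) (Y - Pyzx))
    (hσzx : 0 < wip w (Z - Pzx) (Z - Pzx))
    (hσwx : 0 < wip w (W - Pwx) (W - Pwx))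
    (hσwzx : 0 < wip w (W - Pwzx) (W - Pwzx))
    (hσzwx : 0 < wip w (Z - Pzwx) (Z - Pzwx))
    (hdf : 1 < (n : ℝ) - (Module.finrank ℝ (Submodule.span ℝ X) : ℝ) - 1) :
    let df : ℝ := (n : ℝ) - (Module.finrank ℝ (Submodule.span ℝ X) : ℝ) - 1
    let σyzx := Real.sqrt (wip w (Y - Pyzx) (Y - Pyzx))
    let σzx := Real.sqrt (wip w (Z - Pzx) (Z - Pzx))
    let σwx := Real.sqrt (wip w (W - Pwx) (W - Pwx))
    let σwzx := Real.sqrt (wip w (W - Pwzx) (W - Pwzx))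
    let σzwx := Real.sqrt (wip w (Z - Pzwx) (Z - Pzwx))
    let σyzxw := Real.sqrt (wip w (Y - Pyzxw) (Y - Pyzxw))
    let SEb := σyzx / (Real.sqrt df * σzx)
    let SEbeta := σyzxw / (Real.sqrt (df - 1) * σzwx)
    let tW := (wip w (W - Pwx) (Z - Pzx) / wip w (W - Pwx) (W - Pwx)) /
      (σzwx / (Real.sqrt df * σwx))
    let ρ := wip w (Y - Pyzx) (W - Pwzx) / (σyzx * σwzx)
    SEbeta = SEb * Real.sqrt (1 + (1 + tW ^ 2) / (df - 1)) * Real.sqrt (1 - ρ ^ 2) := by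
  intro df σyzx σzx σwx σwzx σzwx σyzxw SEb SEbeta tW ρ
  have hS : 0 < ∑ i, w i := by
    rcases (Finset.sum_nonneg fun i _ => (hw i).le).lt_or_eq with h | h
    · exact h
    · exfalso
      have hz : wip w (Z - Pzx) (Z - Pzx) = 0 := by unfold wip; rw [← h, div_zero]
      linarith
  rw [Set.insert_comm] at hPyzxw
  have hzid := blp_var w hw hS hPzx hPwx hPzwx (ne_of_gt hσwx)
  have hyid := blp_var w hw hS hPyzx hPwzx hPyzxw (ne_of_gt hσwzx)
  have hf0 : 0 ≤ wip w (Y - Pyzxw) (Y - Pyzxw) := wip_self_nonneg w hw _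
  have hzid' : wip w (Z - Pzwx) (Z - Pzwx) =
      wip w (Z - Pzx) (Z - Pzx) -
        (wip w (W - Pwx) (Z - Pzx)) ^ 2 / wip w (W - Pwx) (W - Pwx) := by
    rw [hzid, wip_comm w (Z - Pzx) (W - Pwx)]
  simp only [SEbeta, SEb, tW, ρ, σyzx, σzx, σwx, σwzx, σzwx, σyzxw, df]
  exact stmt4_alg _ _ _ _ _ _ _ _ _ hσyzx hσzx hσwx hσwzx hσzwx hf0 hdf hzid' hyid
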